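/- (Error difference inequality, interior neighborhoods.) Let f* satisfy the LPA stationarity condition. Then for every k with 1 ≤ k ≤ l−1: C_in(k)·(E_in(k) − E_out(k−1)) + μ Σ_{i∈N_k} |f*_i − y_i| ≤ C_out(k)·(E_in(k+1) − E_out(k)) + s_k + μ|N_k|·α_k, where E_in, E_out are evaluated at f = f* (and E_out(0) = 0 since f* = y on labeled points). -/

import Mathlib

open Finset

/-- The graph on the data points: an edge between distinct `i, j` iff the weight is positive. -/
def graphOf {N : ℕ} (w : Fin N → Fin N → ℝ) : SimpleGraph (Fin N) where
  Adj i j := i ≠ j ∧ 0 < w i j ∧ 0 < w j i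
  symm := ⟨fun _ _ h => ⟨h.1.symm, h.2.2, h.2.1⟩⟩
  loopless := ⟨fun _ h => h.1 rfl⟩

/-- Hop distance from `i` to the set `L = {0, …, n−1}` of labeled points
(`⊤` if `i` is not reachable from any labeled point). -/
noncomputable def hopDist {N : ℕ} (w : Fin N → Fin N → ℝ) (n : ℕ) (i : Fin N) : ℕ∞ :=
  ⨅ v ∈ {v : Fin N | (v : ℕ) < n}, (graphOf w).edist i v

open scoped Classical in
/-- `N_k`: the set of points at hop distance exactly `k` from the labeled set. -/
noncomputable def Nbhd {N : ℕ} (w : Fin N → Fin N → ℝ) (n k : ℕ) : Finset (Fin N) :=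
  Finset.univ.filter fun i => hopDist w n i = (k : ℕ∞)

/-- In-flow `C_in(k) = ∑_{i∈N_k, j∈N_{k−1}} wᵢⱼ`. -/
noncomputable def Cin {N : ℕ} (w : Fin N → Fin N → ℝ) (n k : ℕ) : ℝ :=
  ∑ i ∈ Nbhd w n k, ∑ j ∈ Nbhd w n (k - 1), w i j

/-- Out-flow `C_out(k) = ∑_{i∈N_k, j∈N_{k+1}} wᵢⱼ`. -/
noncomputable def Cout {N : ℕ} (w : Fin N → Fin N → ℝ) (n k : ℕ) : ℝ :=
  ∑ i ∈ Nbhd w n k, ∑ j ∈ Nbhd w n (k + 1), w i j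

/-- In-error `E_in(k) = (∑_{i∈N_k, j∈N_{k−1}} wᵢⱼ|fᵢ − yᵢ|) / C_in(k)`. -/
noncomputable def Ein {N : ℕ} (w : Fin N → Fin N → ℝ) (n : ℕ) (y f : Fin N → ℝ) (k : ℕ) : ℝ :=
  (∑ i ∈ Nbhd w n k, ∑ j ∈ Nbhd w n (k - 1), w i j * |f i - y i|) / Cin w n k

/-- Out-error `E_out(k) = (∑_{i∈N_k, j∈N_{k+1}} wᵢⱼ|fᵢ − yᵢ|) / C_out(k)`. -/
noncomputable def Eout {N : ℕ} (w : Fin N → Fin N → ℝ) (n : ℕ) (y f : Fin N → ℝ) (k : ℕ) : ℝ :=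
  (∑ i ∈ Nbhd w n k, ∑ j ∈ Nbhd w n (k + 1), w i j * |f i - y i|) / Cout w n k

/-- Smoothness `s_k = ∑_{i∈N_k} ∑_j wᵢⱼ|yⱼ − yᵢ|`. -/
noncomputable def smoothnessOf {N : ℕ} (w : Fin N → Fin N → ℝ) (n : ℕ) (y : Fin N → ℝ)
    (k : ℕ) : ℝ :=
  ∑ i ∈ Nbhd w n k, ∑ j : Fin N, w i j * |y j - y i|

/-- Prior information error `α_k = (∑_{i∈N_k} |hᵢ − yᵢ|) / |N_k|`. -/
noncomputable def priorErr {N : ℕ} (w : Fin N → Fin N → ℝ) (n : ℕ) (y h : Fin N → ℝ)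
    (k : ℕ) : ℝ :=
  (∑ i ∈ Nbhd w n k, |h i - y i|) / (Nbhd w n k).card

/-- Average error `E_k = (∑_{i∈N_k} |fᵢ − yᵢ|) / |N_k|`. -/
noncomputable def avgErr {N : ℕ} (w : Fin N → Fin N → ℝ) (n : ℕ) (y f : Fin N → ℝ)
    (k : ℕ) : ℝ :=
  (∑ i ∈ Nbhd w n k, |f i - y i|) / (Nbhd w n k).card

section AuxTest
variable {N : ℕ} {w : Fin N → Fin N → ℝ} {n : ℕ}

lemma mem_Nbhd_iff {i : Fin N} {k : ℕ} : i ∈ Nbhd w n k ↔ hopDist w n i = (k : ℕ∞) := by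
  classical
  simp [Nbhd]

lemma hopDist_le {i v : Fin N} (hv : (v : ℕ) < n) :
    hopDist w n i ≤ (graphOf w).edist i v :=
  iInf₂_le v hv

lemma hopDist_exists_edist {i : Fin N} {k : ℕ} (h : hopDist w n i = (k : ℕ∞)) :
    ∃ v : Fin N, (v : ℕ) < n ∧ (graphOf w).edist i v = (k : ℕ∞) := by
  have hlt : hopDist w n i < ((k : ℕ∞) + 1) := by
    rw [h]; exact ENat.lt_add_one_iff (by simp) |>.mpr le_rfl
  rw [hopDist, iInf_lt_iff] at hlt
  obtain ⟨v, hv⟩ := hlt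
  rw [iInf_lt_iff] at hv
  obtain ⟨hvn, hlt⟩ := hv
  refine ⟨v, hvn, le_antisymm ?_ ?_⟩
  · exact (ENat.lt_add_one_iff (by simp)).mp hlt
  · rw [← h]; exact hopDist_le hvn

lemma hopDist_of_labeled {i : Fin N} (hi : (i : ℕ) < n) : hopDist w n i = 0 :=
  le_antisymm (le_trans (hopDist_le hi) (by simp [SimpleGraph.edist_self])) zero_le

lemma le_of_mem_Nbhd {i : Fin N} {k : ℕ} (hk : 1 ≤ k) (hi : i ∈ Nbhd w n k) :
    n ≤ (i : ℕ) := by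
  by_contra hlt
  push_neg at hlt
  have h0 := hopDist_of_labeled (w := w) hlt
  rw [mem_Nbhd_iff, h0] at hi
  have : k = 0 := by exact_mod_cast hi.symm
  omega

lemma hopDist_le_succ {i j : Fin N} (hadj : (graphOf w).Adj i j) {k : ℕ}
    (hi : hopDist w n i = (k : ℕ∞)) : hopDist w n j ≤ ((k + 1 : ℕ) : ℕ∞) := by
  obtain ⟨v, hvn, hd⟩ := hopDist_exists_edist hi
  have htri : (graphOf w).edist j v ≤ (graphOf w).edist j i + (graphOf w).edist i v :=
    SimpleGraph.edist_triangle
  have hji : (graphOf w).edist j i = 1 := SimpleGraph.edist_eq_one_iff_adj.mpr hadj.symm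
  calc hopDist w n j ≤ (graphOf w).edist j v := hopDist_le hvn
    _ ≤ (graphOf w).edist j i + (graphOf w).edist i v := htri
    _ = ((k + 1 : ℕ) : ℕ∞) := by rw [hji, hd]; push_cast; ring

end AuxTest
section AuxTest2
variable {N : ℕ} {w : Fin N → Fin N → ℝ} {n : ℕ}

lemma adj_of_pos (hw_symm : ∀ i j, w i j = w j i) {i j : Fin N}
    (hne : i ≠ j) (hpos : 0 < w i j) : (graphOf w).Adj i j :=
  show i ≠ j ∧ 0 < w i j ∧ 0 < w j i from ⟨hne, hpos, by rw [← hw_symm]; exact hpos⟩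

/-- Every vertex in `N_k` for `k ≥ 1` has a neighbor in `N_{k-1}`. -/
lemma exists_neighbor_in_prev {i : Fin N} {k : ℕ} (hk : 1 ≤ k)
    (hi : i ∈ Nbhd w n k) :
    ∃ u : Fin N, u ∈ Nbhd w n (k - 1) ∧ (graphOf w).Adj i u := by
  rw [mem_Nbhd_iff] at hi
  obtain ⟨v, hvn, hd⟩ := hopDist_exists_edist hi
  obtain ⟨p, hp⟩ := SimpleGraph.exists_walk_of_edist_eq_coe hd
  cases p with
  | nil => simp at hp; omega
  | @cons _ u _ hadj q =>
    have hqlen : q.length = k - 1 := by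
      simp [SimpleGraph.Walk.length_cons] at hp; omega
    have hle : hopDist w n u ≤ ((k - 1 : ℕ) : ℕ∞) := by
      refine le_trans (hopDist_le hvn) ?_
      have := SimpleGraph.edist_le q
      rwa [hqlen] at this
    obtain ⟨m, hm⟩ : ∃ m : ℕ, hopDist w n u = (m : ℕ∞) := by
      have : hopDist w n u ≠ ⊤ := by
        intro ht; rw [ht] at hle; simp at hle
      exact ⟨(hopDist w n u).toNat, (ENat.coe_toNat this).symm⟩
    have hmle : m ≤ k - 1 := by rw [hm] at hle; exact_mod_cast hle
    have hge : hopDist w n i ≤ ((m + 1 : ℕ) : ℕ∞) := hopDist_le_succ hadj.symm hm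
    have hkm : k ≤ m + 1 := by rw [hi] at hge; exact_mod_cast hge
    have : m = k - 1 := by omega
    exact ⟨u, mem_Nbhd_iff.mpr (by rw [hm, this]), hadj⟩

lemma Cin_pos (hw_nonneg : ∀ i j, 0 ≤ w i j) {k : ℕ} (hk : 1 ≤ k)
    (hne : (Nbhd w n k).Nonempty) : 0 < Cin w n k := by
  obtain ⟨i, hi⟩ := hne
  obtain ⟨u, hu, hadj⟩ := exists_neighbor_in_prev hk hi
  have h1 : 0 < ∑ j ∈ Nbhd w n (k - 1), w i j :=
    lt_of_lt_of_le (hadj : i ≠ u ∧ 0 < w i u ∧ 0 < w u i).2.1 (Finset.single_le_sum (fun j _ => hw_nonneg i j) hu)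
  exact lt_of_lt_of_le h1 (Finset.single_le_sum
    (fun i' _ => Finset.sum_nonneg fun j _ => hw_nonneg i' j) hi)

lemma Cout_eq_Cin_succ (hw_symm : ∀ i j, w i j = w j i) (k : ℕ) :
    Cout w n k = Cin w n (k + 1) := by
  rw [Cout, Cin, Finset.sum_comm]
  simp only [Nat.add_sub_cancel]
  exact Finset.sum_congr rfl fun i _ => Finset.sum_congr rfl fun j _ => hw_symm j i

end AuxTest2
section AuxTest3
variable {N : ℕ} {w : Fin N → Fin N → ℝ} {n : ℕ}

lemma Nbhd_disjoint {a b : ℕ} (hab : a ≠ b) : Disjoint (Nbhd w n a) (Nbhd w n b) := by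
  rw [Finset.disjoint_left]
  intro i hia hib
  rw [mem_Nbhd_iff] at hia hib
  exact hab (by exact_mod_cast hia.symm.trans hib)

/-- For `i ∈ N_k` with `k ≥ 1`, sums of `w i j * g j` over all `j` reduce to
`N_{k-1} ∪ N_k ∪ N_{k+1}`. -/
lemma sum_split (hw_symm : ∀ i j, w i j = w j i) (hw_nonneg : ∀ i j, 0 ≤ w i j)
    {i : Fin N} {k : ℕ} (hk : 1 ≤ k) (hi : i ∈ Nbhd w n k) (g : Fin N → ℝ) :
    ∑ j : Fin N, w i j * g j
      = (∑ j ∈ Nbhd w n (k - 1), w i j * g j) + (∑ j ∈ Nbhd w n k, w i j * g j)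
        + (∑ j ∈ Nbhd w n (k + 1), w i j * g j) := by
  have hdisj1 : Disjoint (Nbhd w n (k - 1)) (Nbhd w n k) := Nbhd_disjoint (by omega)
  have hdisj2 : Disjoint (Nbhd w n (k - 1) ∪ Nbhd w n k) (Nbhd w n (k + 1)) := by
    refine Finset.disjoint_union_left.mpr ⟨Nbhd_disjoint (by omega), Nbhd_disjoint (by omega)⟩
  rw [← Finset.sum_union hdisj1, ← Finset.sum_union hdisj2]
  symm
  apply Finset.sum_subset (Finset.subset_univ _)
  intro j _ hj
  have hwij : w i j = 0 := by
    by_contra hne0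
    have hpos : 0 < w i j := lt_of_le_of_ne (hw_nonneg i j) (Ne.symm hne0)
    have hji : j ≠ i := by
      rintro rfl
      exact hj (Finset.mem_union_left _ (Finset.mem_union_right _ hi))
    have hadj : (graphOf w).Adj i j := adj_of_pos hw_symm (Ne.symm hji) hpos
    rw [mem_Nbhd_iff] at hi
    have hle : hopDist w n j ≤ ((k + 1 : ℕ) : ℕ∞) := hopDist_le_succ hadj hi
    obtain ⟨m, hm⟩ : ∃ m : ℕ, hopDist w n j = (m : ℕ∞) := by
      have : hopDist w n j ≠ ⊤ := by
        intro ht; rw [ht, top_le_iff] at hle; exact ENat.coe_ne_top _ hle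
      exact ⟨(hopDist w n j).toNat, (ENat.coe_toNat this).symm⟩
    have hmle : m ≤ k + 1 := by rw [hm] at hle; exact_mod_cast hle
    have hge : hopDist w n i ≤ ((m + 1 : ℕ) : ℕ∞) := hopDist_le_succ hadj.symm hm
    have hkm : k ≤ m + 1 := by rw [hi] at hge; exact_mod_cast hge
    have hcases : m = k - 1 ∨ m = k ∨ m = k + 1 := by omega
    apply hj
    rcases hcases with h | h | h
    · exact Finset.mem_union_left _ (Finset.mem_union_left _
        (mem_Nbhd_iff.mpr (by rw [hm, h])))
    · exact Finset.mem_union_left _ (Finset.mem_union_right _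
        (mem_Nbhd_iff.mpr (by rw [hm, h])))
    · exact Finset.mem_union_right _ (mem_Nbhd_iff.mpr (by rw [hm, h]))
  rw [hwij, zero_mul]

end AuxTest3
section AuxTest4
variable {N : ℕ} {w : Fin N → Fin N → ℝ} {n : ℕ}

lemma pointwise_ineq (hw_symm : ∀ i j, w i j = w j i) (hw_nonneg : ∀ i j, 0 ≤ w i j)
    (y h : Fin N → ℝ) {μ : ℝ} (hμ : 0 ≤ μ) (fstar : Fin N → ℝ)
    (hstat : ∀ i : Fin N, n ≤ (i : ℕ) →
      fstar i = ((∑ j, w i j * fstar j) + μ * h i) / ((∑ j, w i j) + μ))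
    {i : Fin N} {k : ℕ} (hk : 1 ≤ k) (hi : i ∈ Nbhd w n k) :
    (∑ j, w i j) * |fstar i - y i| + μ * |fstar i - y i|
      ≤ (∑ j, w i j * |fstar j - y j|) + (∑ j, w i j * |y j - y i|)
        + μ * |h i - y i| := by
  have hni : n ≤ (i : ℕ) := le_of_mem_Nbhd hk hi
  obtain ⟨u, hu, hadj⟩ := exists_neighbor_in_prev hk hi
  have hWpos : 0 < ∑ j, w i j :=
    lt_of_lt_of_le (hadj : i ≠ u ∧ 0 < w i u ∧ 0 < w u i).2.1 (Finset.single_le_sum (fun j _ => hw_nonneg i j)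
      (Finset.mem_univ u))
  have hD : 0 < (∑ j, w i j) + μ := by linarith
  have h1 : fstar i * ((∑ j, w i j) + μ) = (∑ j, w i j * fstar j) + μ * h i := by
    rw [hstat i hni]; field_simp
  have key : ((∑ j, w i j) + μ) * (fstar i - y i)
      = (∑ j, w i j * (fstar j - y j)) + (∑ j, w i j * (y j - y i)) + μ * (h i - y i) := by
    have e1 : ∑ j, w i j * (fstar j - y j) = (∑ j, w i j * fstar j) - ∑ j, w i j * y j := by
      simp [mul_sub, Finset.sum_sub_distrib]
    have e2 : ∑ j, w i j * (y j - y i) = (∑ j, w i j * y j) - (∑ j, w i j) * y i := by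
      simp [mul_sub, Finset.sum_sub_distrib, Finset.sum_mul]
    rw [e1, e2]; linear_combination h1
  have lhs_eq : (∑ j, w i j) * |fstar i - y i| + μ * |fstar i - y i|
      = |((∑ j, w i j) + μ) * (fstar i - y i)| := by
    rw [abs_mul, abs_of_pos hD, add_mul]
  rw [lhs_eq, key]
  calc |(∑ j, w i j * (fstar j - y j)) + (∑ j, w i j * (y j - y i)) + μ * (h i - y i)|
      ≤ |(∑ j, w i j * (fstar j - y j)) + (∑ j, w i j * (y j - y i))| + |μ * (h i - y i)| :=
        abs_add_le _ _
    _ ≤ |∑ j, w i j * (fstar j - y j)| + |∑ j, w i j * (y j - y i)| + |μ * (h i - y i)| := by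
        gcongr; exact abs_add_le _ _
    _ ≤ (∑ j, |w i j * (fstar j - y j)|) + (∑ j, |w i j * (y j - y i)|) + |μ * (h i - y i)| := by
        gcongr <;> exact Finset.abs_sum_le_sum_abs _ _
    _ = (∑ j, w i j * |fstar j - y j|) + (∑ j, w i j * |y j - y i|) + μ * |h i - y i| := by
        simp [abs_mul, abs_of_nonneg (hw_nonneg i _), abs_of_nonneg hμ]

end AuxTest4

/-- (Error difference inequality, interior neighborhoods.) If `f*` satisfies
the LPA stationarity condition, then for every `1 ≤ k ≤ l − 1`:
`C_in(k)(E_in(k) − E_out(k−1)) + μ ∑_{i∈N_k}|f*ᵢ − yᵢ|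
  ≤ C_out(k)(E_in(k+1) − E_out(k)) + s_k + μ|N_k|α_k`. -/
theorem error_difference_inequality_interior
    {N n : ℕ} (hn : 0 < n) (hnN : n ≤ N)
    (w : Fin N → Fin N → ℝ)
    (hw_symm : ∀ i j, w i j = w j i)
    (hw_nonneg : ∀ i j, 0 ≤ w i j)
    (y h : Fin N → ℝ)
    (hy : ∀ i, y i ∈ Set.Icc (0 : ℝ) 1)
    (hh : ∀ i, h i ∈ Set.Icc (0 : ℝ) 1)
    (μ : ℝ) (hμ : 0 ≤ μ)
    (fstar : Fin N → ℝ)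
    (hconstr : ∀ i : Fin N, (i : ℕ) < n → fstar i = y i)
    (hstat : ∀ i : Fin N, n ≤ (i : ℕ) →
      fstar i = ((∑ j, w i j * fstar j) + μ * h i) / ((∑ j, w i j) + μ))
    (l : ℕ)
    (hne : ∀ k, k ≤ l → (Nbhd w n k).Nonempty)
    (hmax : ∀ k, l < k → Nbhd w n k = ∅)
    (k : ℕ) (hk1 : 1 ≤ k) (hk2 : k + 1 ≤ l) :
    Cin w n k * (Ein w n y fstar k - Eout w n y fstar (k - 1))
        + μ * ∑ i ∈ Nbhd w n k, |fstar i - y i|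
      ≤ Cout w n k * (Ein w n y fstar (k + 1) - Eout w n y fstar k)
        + smoothnessOf w n y k + μ * (Nbhd w n k).card * priorErr w n y h k := by
  have hBk : k ≤ l := by omega
  have hCinK : 0 < Cin w n k := Cin_pos hw_nonneg hk1 (hne k hBk)
  have hCinK1 : 0 < Cin w n (k + 1) := Cin_pos hw_nonneg (by omega) (hne (k + 1) hk2)
  have hCout : Cout w n k = Cin w n (k + 1) := Cout_eq_Cin_succ hw_symm k
  have hk' : k - 1 + 1 = k := Nat.succ_pred_eq_of_pos hk1
  have hCoutPrev : Cout w n (k - 1) = Cin w n k := by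
    have := Cout_eq_Cin_succ (n := n) hw_symm (k - 1)
    rwa [hk'] at this
  have P1 : Cin w n k * Ein w n y fstar k
      = ∑ i ∈ Nbhd w n k, ∑ j ∈ Nbhd w n (k - 1), w i j * |fstar i - y i| := by
    rw [Ein, mul_comm, div_mul_cancel₀ _ hCinK.ne']
  have P2 : Cin w n k * Eout w n y fstar (k - 1)
      = ∑ i ∈ Nbhd w n (k - 1), ∑ j ∈ Nbhd w n k, w i j * |fstar i - y i| := by
    rw [Eout, hk', hCoutPrev, mul_comm, div_mul_cancel₀ _ hCinK.ne']
  have P3 : Cout w n k * Ein w n y fstar (k + 1)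
      = ∑ i ∈ Nbhd w n (k + 1), ∑ j ∈ Nbhd w n k, w i j * |fstar i - y i| := by
    rw [Ein, Nat.add_sub_cancel, hCout, mul_comm, div_mul_cancel₀ _ hCinK1.ne']
  have P4 : Cout w n k * Eout w n y fstar k
      = ∑ i ∈ Nbhd w n k, ∑ j ∈ Nbhd w n (k + 1), w i j * |fstar i - y i| := by
    rw [Eout, mul_comm, div_mul_cancel₀]
    rw [hCout]; exact hCinK1.ne'
  have hcard : (0 : ℝ) < (Nbhd w n k).card := by
    exact_mod_cast Finset.card_pos.mpr (hne k hBk)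
  have P5 : μ * ((Nbhd w n k).card : ℝ) * priorErr w n y h k
      = μ * ∑ i ∈ Nbhd w n k, |h i - y i| := by
    rw [priorErr, mul_assoc, mul_comm ((Nbhd w n k).card : ℝ), div_mul_cancel₀ _ hcard.ne']
  have SW1 : ∑ i ∈ Nbhd w n (k - 1), ∑ j ∈ Nbhd w n k, w i j * |fstar i - y i|
      = ∑ i ∈ Nbhd w n k, ∑ j ∈ Nbhd w n (k - 1), w i j * |fstar j - y j| := by
    rw [Finset.sum_comm]
    exact Finset.sum_congr rfl fun i _ => Finset.sum_congr rfl fun j _ => by rw [hw_symm]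
  have SW2 : ∑ i ∈ Nbhd w n (k + 1), ∑ j ∈ Nbhd w n k, w i j * |fstar i - y i|
      = ∑ i ∈ Nbhd w n k, ∑ j ∈ Nbhd w n (k + 1), w i j * |fstar j - y j| := by
    rw [Finset.sum_comm]
    exact Finset.sum_congr rfl fun i _ => Finset.sum_congr rfl fun j _ => by rw [hw_symm]
  have SWB : ∑ i ∈ Nbhd w n k, ∑ j ∈ Nbhd w n k, w i j * |fstar i - y i|
      = ∑ i ∈ Nbhd w n k, ∑ j ∈ Nbhd w n k, w i j * |fstar j - y j| := by
    rw [Finset.sum_comm]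
    exact Finset.sum_congr rfl fun i _ => Finset.sum_congr rfl fun j _ => by rw [hw_symm]
  have MAIN : ∑ i ∈ Nbhd w n k,
      ((∑ j ∈ Nbhd w n (k - 1), w i j * |fstar i - y i|)
        + (∑ j ∈ Nbhd w n k, w i j * |fstar i - y i|)
        + (∑ j ∈ Nbhd w n (k + 1), w i j * |fstar i - y i|)
        + μ * |fstar i - y i|)
      ≤ ∑ i ∈ Nbhd w n k,
        ((∑ j ∈ Nbhd w n (k - 1), w i j * |fstar j - y j|)
          + (∑ j ∈ Nbhd w n k, w i j * |fstar j - y j|)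
          + (∑ j ∈ Nbhd w n (k + 1), w i j * |fstar j - y j|)
          + (∑ j, w i j * |y j - y i|)
          + μ * |h i - y i|) := by
    apply Finset.sum_le_sum
    intro i hi
    have hpt := pointwise_ineq hw_symm hw_nonneg y h hμ fstar hstat hk1 hi
    have hs1 := sum_split hw_symm hw_nonneg hk1 hi (fun j => |fstar j - y j|)
    have hs2 := sum_split hw_symm hw_nonneg hk1 hi (fun _ => |fstar i - y i|)
    have hmul : (∑ j, w i j) * |fstar i - y i| = ∑ j, w i j * |fstar i - y i| :=
      Finset.sum_mul _ _ _
    linarith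
  simp only [Finset.sum_add_distrib, ← Finset.mul_sum] at MAIN
  rw [mul_sub, mul_sub, smoothnessOf]
  linarith
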